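/- Let K[A,B] be a polynomial ring over a field K of characteristic p > 0, and suppose q = p^e satisfies q ≡ 1 mod n for some n ≥ 3, say q = nk+1 with k ≥ 1. Then every monomial of degree (2n-3)k in A and B lies in the ideal I = (A^{(n-1)k}, B^{(n-1)k}, (A+B)^{(n-1)k}); that is, (A,B)^{(2n-3)k} ⊆ I. -/
import Mathlib

open MvPolynomial

namespace StmtOneAux

open Finset


private lemma neg_one_pow_q {K : Type*} [CommRing K] (p : ℕ) [hp : Fact p.Prime] [CharP K p]
    (e : ℕ) : (-1 : K) ^ (p ^ e - 1) = 1 := by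
  by_cases h2 : p = 2
  · have h0 : ((2 : ℕ) : K) = 0 := by rw [← h2]; exact CharP.cast_eq_zero K p
    have h1 : (-1 : K) = 1 := by
      have h11 : (1 : K) + 1 = 0 := by push_cast at h0; linear_combination h0
      linear_combination -h11
    rw [h1, one_pow]
  · have hodd : Odd (p ^ e) := (hp.out.odd_of_ne_two h2).pow
    have hev : Even (p ^ e - 1) := Nat.Odd.sub_odd hodd odd_one
    exact Even.neg_one_pow hev

private lemma choose_q_sub_one {K : Type*} [CommRing K] (p : ℕ) [hp : Fact p.Prime] [CharP K p]
    (e : ℕ) (d : ℕ) (hd : d ≤ p ^ e - 1) :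
    (((p ^ e - 1).choose d : ℕ) : K) = (-1) ^ d := by
  induction d with
  | zero => simp
  | succ d ih =>
    have hq1 : 1 ≤ p ^ e := Nat.one_le_pow _ _ hp.out.pos
    have hd' : d ≤ p ^ e - 1 := by omega
    have hpascal : (p ^ e).choose (d + 1)
        = (p ^ e - 1).choose d + (p ^ e - 1).choose (d + 1) := by
      have h : p ^ e = (p ^ e - 1) + 1 := by omega
      rw [h]
      exact Nat.choose_succ_succ _ _
    have hdvd : p ∣ (p ^ e).choose (d + 1) :=
      Nat.Prime.dvd_choose_pow hp.out (by omega) (by omega)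
    have hz : (((p ^ e).choose (d + 1) : ℕ) : K) = 0 :=
      (CharP.cast_eq_zero_iff K p _).mpr hdvd
    have := ih hd'
    rw [hpascal] at hz
    push_cast at hz
    rw [this] at hz
    have : (((p ^ e - 1).choose (d + 1) : ℕ) : K) = -(-1) ^ d := by linear_combination hz
    rw [this]
    ring



private lemma choose_congr {K : Type*} [CommRing K] (p : ℕ) [hp : Fact p.Prime] [CharP K p]
    (e : ℕ) : ∀ c d i : ℕ, c + d = p ^ e - 1 → i ≤ c →
    ((c.choose i : ℕ) : K) = (-1) ^ i * (((d + i).choose d : ℕ) : K) := by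
  intro c
  induction c with
  | zero =>
    intro d i h hi
    interval_cases i
    simp
  | succ c ih =>
    intro d i h hi
    match i with
    | 0 => simp
    | (j + 1) =>
      by_cases hjc : j + 1 ≤ c
      · have h' : c + (d + 1) = p ^ e - 1 := by omega
        have e1 := ih (d + 1) j h' (by omega)
        have e2 := ih (d + 1) (j + 1) h' hjc
        rw [Nat.choose_succ_succ]
        push_cast
        rw [e1, e2]
        have hpas : (d + (j + 1)).choose d + (d + (j + 1)).choose (d + 1)
            = (d + 1 + (j + 1)).choose (d + 1) := by
          have h3 := (Nat.choose_succ_succ (d + j + 1) d).symm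
          simpa [Nat.succ_eq_add_one, show d + j + 1 = d + (j + 1) by omega,
            show d + (j + 1) + 1 = d + 1 + (j + 1) by omega] using h3
        have hpasK : (((d + (j + 1)).choose d : ℕ) : K)
            = (((d + 1 + (j + 1)).choose (d + 1) : ℕ) : K)
              - (((d + (j + 1)).choose (d + 1) : ℕ) : K) := by
          rw [← hpas]; push_cast; ring
        have h6 : d + 1 + j = d + (j + 1) := by omega
        rw [hpasK, ← h6]
        ring
      · have hjc' : j = c := by omega
        subst hjc'
        rw [Nat.choose_self]
        have hd : d + (j + 1) = p ^ e - 1 := by omega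
        rw [hd, choose_q_sub_one p e d (by omega)]
        rw [← pow_add]
        have h7 : j + 1 + d = p ^ e - 1 := by omega
        rw [h7, neg_one_pow_q p e]
        simp


private lemma span_pair_pow_le {R : Type*} [CommRing R] (A B : R) (D : ℕ) (J : Ideal R)
    (h : ∀ i, i ≤ D → A ^ i * B ^ (D - i) ∈ J) :
    Ideal.span {A, B} ^ D ≤ J := by
  have main : ∀ E : ℕ, Ideal.span {A, B} ^ E
      ≤ Ideal.span {x | ∃ i ≤ E, x = A ^ i * B ^ (E - i)} := by
    intro E
    induction E with
    | zero =>
      rw [pow_zero, Ideal.one_eq_top, top_le_iff, Ideal.eq_top_iff_one]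
      exact Ideal.subset_span ⟨0, le_rfl, by simp⟩
    | succ E ihE =>
      rw [pow_succ]
      refine le_trans (Ideal.mul_mono ihE le_rfl) ?_
      rw [Ideal.span_mul_span']
      apply Ideal.span_mono
      rintro z ⟨x, hx, y, hy, rfl⟩
      obtain ⟨i, hi, rfl⟩ := hx
      rcases hy with rfl | rfl
      · refine ⟨i + 1, by omega, ?_⟩
        have : E + 1 - (i + 1) = E - i := by omega
        rw [this, pow_succ]
        ring
      · refine ⟨i, by omega, ?_⟩
        have : E + 1 - i = (E - i) + 1 := by omega
        rw [this, pow_succ]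
        ring
  refine le_trans (main D) (Ideal.span_le.2 ?_)
  rintro x ⟨i, hi, rfl⟩
  exact h i hi


private lemma det_binomial {K : Type*} [CommRing K] (κ a : ℕ) :
    (Matrix.of fun (d u : Fin κ) => (((a + (u : ℕ)).choose (d : ℕ) : ℕ) : K)).det = 1 := by
  set L : Matrix (Fin κ) (Fin κ) K :=
    Matrix.of fun d l => if (l : ℕ) ≤ (d : ℕ) then ((a.choose ((d : ℕ) - (l : ℕ)) : ℕ) : K) else 0
    with hL
  set U : Matrix (Fin κ) (Fin κ) K :=
    Matrix.of fun l u => (((u : ℕ).choose (l : ℕ) : ℕ) : K) with hU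
  have hLU : (Matrix.of fun (d u : Fin κ) => (((a + (u : ℕ)).choose (d : ℕ) : ℕ) : K)) = L * U := by
    ext d u
    rw [Matrix.mul_apply]
    simp only [hL, hU, Matrix.of_apply]
    have hnat : ∑ l ∈ range κ,
        (if l ≤ (d : ℕ) then a.choose ((d : ℕ) - l) * (u : ℕ).choose l else 0)
        = (a + (u : ℕ)).choose (d : ℕ) := by
      have hvdm : (a + (u : ℕ)).choose (d : ℕ)
          = ∑ j ∈ range ((d : ℕ) + 1), a.choose j * (u : ℕ).choose ((d : ℕ) - j) := by
        rw [Nat.add_choose_eq, Finset.Nat.sum_antidiagonal_eq_sum_range_succ_mk]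
      have hrefl := Finset.sum_range_reflect
        (fun j => a.choose j * (u : ℕ).choose ((d : ℕ) - j)) ((d : ℕ) + 1)
      have hsub : ∑ l ∈ range κ,
          (if l ≤ (d : ℕ) then a.choose ((d : ℕ) - l) * (u : ℕ).choose l else 0)
          = ∑ l ∈ range ((d : ℕ) + 1),
          (if l ≤ (d : ℕ) then a.choose ((d : ℕ) - l) * (u : ℕ).choose l else 0) := by
        refine (Finset.sum_subset (Finset.range_subset_range.2 (by have := d.isLt; omega)) ?_).symm
        intro l _ hl
        rw [Finset.mem_range] at hl
        rw [if_neg (by omega)]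
      rw [hsub, hvdm, ← hrefl]
      refine Finset.sum_congr rfl fun l hl => ?_
      rw [Finset.mem_range] at hl
      rw [if_pos (by omega)]
      have h1 : (d : ℕ) + 1 - 1 - l = (d : ℕ) - l := by omega
      have h2 : (d : ℕ) - ((d : ℕ) - l) = l := by omega
      rw [h1, h2]
    rw [← hnat]
    rw [Nat.cast_sum]
    rw [Fin.sum_univ_eq_sum_range
      (fun l => (if l ≤ (d : ℕ) then ((a.choose ((d : ℕ) - l) : ℕ) : K) else 0)
        * (((u : ℕ).choose l : ℕ) : K)) κ]
    refine Finset.sum_congr rfl fun l _ => ?_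
    split_ifs with hld
    · push_cast
      ring
    · simp
  have hdetL : L.det = 1 := by
    rw [Matrix.det_of_lowerTriangular L ?_]
    · refine Finset.prod_eq_one fun d _ => ?_
      simp [hL]
    · intro i j hij
      have : (i : ℕ) < (j : ℕ) := hij
      simp only [hL, Matrix.of_apply]
      rw [if_neg (by omega)]
  have hdetU : U.det = 1 := by
    rw [Matrix.det_of_upperTriangular (show U.BlockTriangular id from ?_)]
    · refine Finset.prod_eq_one fun l _ => ?_
      simp [hU]
    · intro i j hij
      have : (j : ℕ) < (i : ℕ) := hij
      simp only [hU, Matrix.of_apply]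
      rw [Nat.choose_eq_zero_of_lt this]
      simp
  rw [hLU, Matrix.det_mul, hdetL, hdetU, mul_one]



set_option maxHeartbeats 2000000 in
theorem main_general {K R : Type*} [Field K] [CommRing R] [Algebra K R]
    (p n e k : ℕ) [Fact p.Prime] [CharP K p]
    (hn : 3 ≤ n) (hk : 1 ≤ k) (hq : p ^ e = n * k + 1) (A B : R) :
    (Ideal.span {A, B}) ^ ((2 * n - 3) * k) ≤
      Ideal.span {A ^ ((n - 1) * k), B ^ ((n - 1) * k), (A + B) ^ ((n - 1) * k)} := by
  obtain ⟨c, rfl⟩ : ∃ c, n = c + 3 := ⟨n - 3, by omega⟩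
  have hD : (2 * (c + 3) - 3) * k = 2 * (c * k) + 3 * k := by
    have h1 : 2 * (c + 3) - 3 = 2 * c + 3 := by omega
    rw [h1]; ring
  have hm : ((c + 3) - 1) * k = c * k + 2 * k := by
    have h1 : (c + 3) - 1 = c + 2 := by omega
    rw [h1]; ring
  rw [hD, hm]
  set ck := c * k with hck
  have hq' : p ^ e = ck + 3 * k + 1 := by rw [hq, hck]; ring
  set m := ck + 2 * k with hmdef
  set D := 2 * ck + 3 * k with hDdef
  set J := Ideal.span {A ^ m, B ^ m, (A + B) ^ m} with hJ
  have hAmJ : A ^ m ∈ J := Ideal.subset_span (by simp)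
  have hBmJ : B ^ m ∈ J := Ideal.subset_span (by simp)
  have hABmJ : (A + B) ^ m ∈ J := Ideal.subset_span (by simp)
  apply span_pair_pow_le
  intro a ha
  by_cases hcase1 : m ≤ a
  · rw [show A ^ a = A ^ m * A ^ (a - m) by rw [← pow_add]; congr 1; omega, mul_assoc]
    exact Ideal.mul_mem_right _ _ hAmJ
  by_cases hcase2 : m ≤ D - a
  · rw [show B ^ (D - a) = B ^ m * B ^ (D - a - m) by rw [← pow_add]; congr 1; omega]
    rw [show A ^ a * (B ^ m * B ^ (D - a - m)) = B ^ m * (A ^ a * B ^ (D - a - m)) by ring]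
    exact Ideal.mul_mem_right _ _ hBmJ
  push_neg at hcase1 hcase2
  have ha1 : ck + k + 1 ≤ a := by omega
  have ha2 : a + 1 ≤ ck + 2 * k := by omega
  have hk2 : 2 ≤ k := by omega
  -- the matrix
  set T : Matrix (Fin (k-1)) (Fin (k-1)) K :=
    Matrix.of fun d u =>
      (((ck + 3*k - (d:ℕ)).choose (k - (d:ℕ) + 1 + (u:ℕ)) : ℕ) : K) with hT
  have hTval : ∀ d u : Fin (k-1), T d u
      = (-1:K)^((d:ℕ)) * ((-1:K)^(k+1+(u:ℕ))
        * ((((k+1)+(u:ℕ)).choose (d:ℕ) : ℕ) : K)) := by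
    intro d u
    have hd := d.isLt
    have hu := u.isLt
    have hcd : (ck + 3*k - (d:ℕ)) + (d:ℕ) = p ^ e - 1 := by omega
    have hi : k - (d:ℕ) + 1 + (u:ℕ) ≤ ck + 3*k - (d:ℕ) := by omega
    have hcc := choose_congr (K := K) p e (ck + 3*k - (d:ℕ)) (d:ℕ)
      (k - (d:ℕ) + 1 + (u:ℕ)) hcd hi
    have harg : (d:ℕ) + (k - (d:ℕ) + 1 + (u:ℕ)) = (k+1)+(u:ℕ) := by omega
    rw [harg] at hcc
    have hTdu : T d u = (((ck + 3*k - (d:ℕ)).choose (k - (d:ℕ) + 1 + (u:ℕ)) : ℕ) : K) := rfl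
    rw [hTdu, hcc]
    have hsign : (-1:K)^(k - (d:ℕ) + 1 + (u:ℕ)) = (-1)^((d:ℕ)) * (-1)^(k+1+(u:ℕ)) := by
      have h2 : (k - (d:ℕ) + 1 + (u:ℕ)) + 2*(d:ℕ) = (d:ℕ) + (k+1+(u:ℕ)) := by omega
      calc (-1:K)^(k - (d:ℕ) + 1 + (u:ℕ))
          = (-1:K)^(k - (d:ℕ) + 1 + (u:ℕ)) * ((-1:K)^2)^((d:ℕ)) := by
            rw [neg_one_sq, one_pow, mul_one]
        _ = (-1:K)^((k - (d:ℕ) + 1 + (u:ℕ)) + 2*(d:ℕ)) := by rw [← pow_mul, ← pow_add]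
        _ = (-1:K)^((d:ℕ) + (k+1+(u:ℕ))) := by rw [h2]
        _ = (-1)^((d:ℕ)) * (-1)^(k+1+(u:ℕ)) := pow_add _ _ _
    rw [hsign]; ring
  have hTdet : IsUnit T.det := by
    set M0 : Matrix (Fin (k-1)) (Fin (k-1)) K :=
      Matrix.of fun (d' u' : Fin (k-1)) => ((((k+1)+(u':ℕ)).choose (d':ℕ) : ℕ) : K) with hM0
    set M1 : Matrix (Fin (k-1)) (Fin (k-1)) K :=
      Matrix.of fun (d' u' : Fin (k-1)) => ((-1:K)^(k+1+(u':ℕ))) * M0 d' u' with hM1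
    have hTfac : T = Matrix.of fun (d' u' : Fin (k-1)) => ((-1:K)^((d':ℕ))) * M1 d' u' := by
      ext d' u'
      have h0 : M1 d' u' = ((-1:K)^(k+1+(u':ℕ))) * ((((k+1)+(u':ℕ)).choose (d':ℕ) : ℕ) : K) := rfl
      simp only [Matrix.of_apply, h0]
      exact hTval d' u'
    have hdet1 : M1.det = (∏ u' : Fin (k-1), ((-1:K)^(k+1+(u':ℕ)))) * M0.det := by
      rw [hM1]
      exact Matrix.det_mul_row (fun u' : Fin (k-1) => ((-1:K)^(k+1+(u':ℕ)))) M0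
    have hdet0 : M0.det = 1 := det_binomial (k-1) (k+1)
    have hdetT : T.det = (∏ d' : Fin (k-1), ((-1:K)^((d':ℕ)))) * M1.det := by
      rw [hTfac]
      exact Matrix.det_mul_column (fun d' : Fin (k-1) => ((-1:K)^((d':ℕ)))) M1
    rw [hdetT, hdet1, hdet0, mul_one]
    rw [isUnit_iff_ne_zero]
    apply mul_ne_zero
    · exact Finset.prod_ne_zero_iff.mpr fun d _ =>
        pow_ne_zero _ (neg_ne_zero.mpr one_ne_zero)
    · exact Finset.prod_ne_zero_iff.mpr fun u _ =>
        pow_ne_zero _ (neg_ne_zero.mpr one_ne_zero)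
  have hTT : T⁻¹ * T = 1 := Matrix.nonsing_inv_mul T hTdet
  set ua : Fin (k-1) := ⟨a - (ck + k + 1), by omega⟩ with hua
  -- key1 : per-d reduction
  have key1 : ∀ d : Fin (k-1),
      A ^ (ck + (d:ℕ)) * (A+B) ^ (ck + 3*k - (d:ℕ))
      - ∑ u : Fin (k-1), (((ck + 3*k - (d:ℕ)).choose (k - (d:ℕ) + 1 + (u:ℕ)) : ℕ) : R)
          * (A ^ (ck + k + 1 + (u:ℕ)) * B ^ (ck + 2*k - 1 - (u:ℕ)))
      ∈ Ideal.span {A ^ m, B ^ m} := by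
    intro d
    have hd : (d:ℕ) < k - 1 := d.isLt
    set Q := ck + 3*k - (d:ℕ) with hQdef
    rw [add_pow, Finset.mul_sum]
    have hterm : ∀ i ∈ range (Q+1),
        A ^ (ck + (d:ℕ)) * (A ^ i * B ^ (Q - i) * ((Q.choose i : ℕ) : R))
        = ((Q.choose i : ℕ) : R) * (A ^ (ck + (d:ℕ) + i) * B ^ (Q - i)) := by
      intro i _
      rw [pow_add A (ck + (d:ℕ)) i]; ring
    rw [Finset.sum_congr rfl hterm]
    rw [← Finset.sum_filter_add_sum_filter_not (range (Q+1))
      (fun i => k - (d:ℕ) < i ∧ i < 2*k - (d:ℕ))]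
    have hmid : ∑ i ∈ (range (Q+1)).filter (fun i => k - (d:ℕ) < i ∧ i < 2*k - (d:ℕ)),
        ((Q.choose i : ℕ) : R) * (A ^ (ck + (d:ℕ) + i) * B ^ (Q - i))
        = ∑ u : Fin (k-1), ((Q.choose (k - (d:ℕ) + 1 + (u:ℕ)) : ℕ) : R)
            * (A ^ (ck + k + 1 + (u:ℕ)) * B ^ (ck + 2*k - 1 - (u:ℕ))) := by
      have hset : (range (Q+1)).filter (fun i => k - (d:ℕ) < i ∧ i < 2*k - (d:ℕ))
          = Finset.Ico (k - (d:ℕ) + 1) (2*k - (d:ℕ)) := by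
        ext i
        simp only [Finset.mem_filter, Finset.mem_range, Finset.mem_Ico]
        omega
      rw [hset, Finset.sum_Ico_eq_sum_range]
      have hlen : 2*k - (d:ℕ) - (k - (d:ℕ) + 1) = k - 1 := by omega
      rw [hlen]
      rw [← Fin.sum_univ_eq_sum_range (fun j =>
        ((Q.choose (k - (d:ℕ) + 1 + j) : ℕ) : R)
          * (A ^ (ck + (d:ℕ) + (k - (d:ℕ) + 1 + j)) * B ^ (Q - (k - (d:ℕ) + 1 + j)))) (k-1)]
      refine Finset.sum_congr rfl fun j _ => ?_
      have e1 : ck + (d:ℕ) + (k - (d:ℕ) + 1 + (j:ℕ)) = ck + k + 1 + (j:ℕ) := by omega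
      have e2 : Q - (k - (d:ℕ) + 1 + (j:ℕ)) = ck + 2*k - 1 - (j:ℕ) := by omega
      rw [e1, e2]
    rw [hmid, add_sub_cancel_left]
    apply Ideal.sum_mem
    intro i hi
    simp only [Finset.mem_filter, Finset.mem_range, not_and_or, not_lt] at hi
    obtain ⟨hiQ, hcases⟩ := hi
    rcases hcases with hle | hge
    · have hrw : ((Q.choose i : ℕ) : R) * (A ^ (ck + (d:ℕ) + i) * B ^ (Q - i))
          = (((Q.choose i : ℕ) : R) * A ^ (ck + (d:ℕ) + i) * B ^ (Q - i - m)) * B ^ m := by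
        conv_lhs => rw [show Q - i = (Q - i - m) + m by omega]
        rw [pow_add B (Q - i - m) m]; ring
      rw [hrw]
      exact Ideal.mul_mem_left _ _ (Ideal.subset_span (by simp))
    · have hrw : ((Q.choose i : ℕ) : R) * (A ^ (ck + (d:ℕ) + i) * B ^ (Q - i))
          = (((Q.choose i : ℕ) : R) * A ^ (ck + (d:ℕ) + i - m) * B ^ (Q - i)) * A ^ m := by
        conv_lhs => rw [show ck + (d:ℕ) + i = (ck + (d:ℕ) + i - m) + m by omega]
        rw [pow_add A (ck + (d:ℕ) + i - m) m]; ring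
      rw [hrw]
      exact Ideal.mul_mem_left _ _ (Ideal.subset_span (by simp))
  -- membership of the witness terms
  have hWmem : ∀ d : Fin (k-1),
      A ^ (ck + (d:ℕ)) * (A+B) ^ (ck + 3*k - (d:ℕ)) ∈ J := by
    intro d
    have hd := d.isLt
    rw [show ck + 3*k - (d:ℕ) = (k - (d:ℕ)) + m by omega,
      pow_add (A+B) (k - (d:ℕ)) m]
    rw [show A ^ (ck + (d:ℕ)) * ((A+B) ^ (k - (d:ℕ)) * (A+B) ^ m)
        = (A ^ (ck + (d:ℕ)) * (A+B) ^ (k - (d:ℕ))) * (A+B) ^ m by ring]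
    exact Ideal.mul_mem_left _ _ hABmJ
  have hPJ : Ideal.span {A ^ m, B ^ m} ≤ J := by
    rw [Ideal.span_le]
    intro x hx
    simp only [Set.mem_insert_iff, Set.mem_singleton_iff] at hx
    rcases hx with rfl | rfl
    · exact hAmJ
    · exact hBmJ
  -- step1
  have step1 : (∑ d : Fin (k-1), algebraMap K R (T⁻¹ ua d)
        * (A ^ (ck + (d:ℕ)) * (A+B) ^ (ck + 3*k - (d:ℕ))))
      - (∑ d : Fin (k-1), algebraMap K R (T⁻¹ ua d)
        * (∑ u : Fin (k-1), (((ck + 3*k - (d:ℕ)).choose (k - (d:ℕ) + 1 + (u:ℕ)) : ℕ) : R)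
            * (A ^ (ck + k + 1 + (u:ℕ)) * B ^ (ck + 2*k - 1 - (u:ℕ)))))
      ∈ Ideal.span {A ^ m, B ^ m} := by
    rw [← Finset.sum_sub_distrib]
    apply Ideal.sum_mem
    intro d _
    rw [← mul_sub]
    exact Ideal.mul_mem_left _ _ (key1 d)
  -- step2
  have step2 : (∑ d : Fin (k-1), algebraMap K R (T⁻¹ ua d)
        * (∑ u : Fin (k-1), (((ck + 3*k - (d:ℕ)).choose (k - (d:ℕ) + 1 + (u:ℕ)) : ℕ) : R)
            * (A ^ (ck + k + 1 + (u:ℕ)) * B ^ (ck + 2*k - 1 - (u:ℕ)))))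
      = A ^ a * B ^ (D - a) := by
    have h1 : ∀ d : Fin (k-1), algebraMap K R (T⁻¹ ua d)
        * (∑ u : Fin (k-1), (((ck + 3*k - (d:ℕ)).choose (k - (d:ℕ) + 1 + (u:ℕ)) : ℕ) : R)
            * (A ^ (ck + k + 1 + (u:ℕ)) * B ^ (ck + 2*k - 1 - (u:ℕ))))
        = ∑ u : Fin (k-1), algebraMap K R (T⁻¹ ua d * T d u)
            * (A ^ (ck + k + 1 + (u:ℕ)) * B ^ (ck + 2*k - 1 - (u:ℕ))) := by
      intro d
      rw [Finset.mul_sum]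
      refine Finset.sum_congr rfl fun u _ => ?_
      rw [map_mul]
      have : algebraMap K R (T d u)
          = (((ck + 3*k - (d:ℕ)).choose (k - (d:ℕ) + 1 + (u:ℕ)) : ℕ) : R) := by
        have hTdu : T d u
            = (((ck + 3*k - (d:ℕ)).choose (k - (d:ℕ) + 1 + (u:ℕ)) : ℕ) : K) := rfl
        rw [hTdu, map_natCast]
      rw [this]; ring
    rw [Finset.sum_congr rfl fun d _ => h1 d]
    rw [Finset.sum_comm]
    have h2 : ∀ u : Fin (k-1),
        (∑ d : Fin (k-1), algebraMap K R (T⁻¹ ua d * T d u)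
          * (A ^ (ck + k + 1 + (u:ℕ)) * B ^ (ck + 2*k - 1 - (u:ℕ))))
        = algebraMap K R ((T⁻¹ * T) ua u)
            * (A ^ (ck + k + 1 + (u:ℕ)) * B ^ (ck + 2*k - 1 - (u:ℕ))) := by
      intro u
      rw [Matrix.mul_apply, map_sum, Finset.sum_mul]
    rw [Finset.sum_congr rfl fun u _ => h2 u, hTT]
    have h3 : ∀ u : Fin (k-1), algebraMap K R ((1 : Matrix (Fin (k-1)) (Fin (k-1)) K) ua u)
        * (A ^ (ck + k + 1 + (u:ℕ)) * B ^ (ck + 2*k - 1 - (u:ℕ)))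
        = if ua = u then A ^ (ck + k + 1 + (u:ℕ)) * B ^ (ck + 2*k - 1 - (u:ℕ)) else 0 := by
      intro u
      rw [Matrix.one_apply]
      split_ifs with h
      · rw [map_one, one_mul]
      · rw [map_zero, zero_mul]
    rw [Finset.sum_congr rfl fun u _ => h3 u]
    rw [Finset.sum_ite_eq]
    simp only [Finset.mem_univ, if_true]
    have huaval : (ua : ℕ) = a - (ck + k + 1) := rfl
    have e1 : ck + k + 1 + (ua:ℕ) = a := by omega
    have e2 : ck + 2*k - 1 - (ua:ℕ) = D - a := by omega
    rw [e1, e2]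
  rw [step2] at step1
  have hfin : A ^ a * B ^ (D - a)
      - (∑ d : Fin (k-1), algebraMap K R (T⁻¹ ua d)
        * (A ^ (ck + (d:ℕ)) * (A+B) ^ (ck + 3*k - (d:ℕ)))) ∈ Ideal.span {A ^ m, B ^ m} := by
    have := Submodule.neg_mem _ step1
    rwa [neg_sub] at this
  have hsum : A ^ a * B ^ (D - a)
      = (A ^ a * B ^ (D - a)
        - (∑ d : Fin (k-1), algebraMap K R (T⁻¹ ua d)
          * (A ^ (ck + (d:ℕ)) * (A+B) ^ (ck + 3*k - (d:ℕ)))))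
      + (∑ d : Fin (k-1), algebraMap K R (T⁻¹ ua d)
          * (A ^ (ck + (d:ℕ)) * (A+B) ^ (ck + 3*k - (d:ℕ)))) := by ring
  rw [hsum]
  exact Ideal.add_mem _ (hPJ hfin)
    (Ideal.sum_mem _ fun d _ => Ideal.mul_mem_left _ _ (hWmem d))


end StmtOneAux

theorem stmt_1 (K : Type*) [Field K] (p n e k : ℕ) [Fact p.Prime] [CharP K p]
    (hn : 3 ≤ n) (he : 1 ≤ e) (hk : 1 ≤ k) (hq : p ^ e = n * k + 1)
    (A B : MvPolynomial (Fin 2) K) (hA : A = X 0) (hB : B = X 1) :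
    (Ideal.span {A, B}) ^ ((2 * n - 3) * k) ≤
      Ideal.span {A ^ ((n - 1) * k), B ^ ((n - 1) * k), (A + B) ^ ((n - 1) * k)} :=
  StmtOneAux.main_general (K := K) p n e k hn hk hq A B
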